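/- As formal power series in q, the generating function for σ_d moex(n), the sum over all distinct-parts partitions π of n of the smallest odd positive integer missing from π, satisfies Σ_{n≥0} σ_d moex(n) q^n = (−q; q)_∞ · (1 + 2 Σ_{n≥1} q^{n^2} / (−q; q^2)_n). -/

import Mathlib

open PowerSeries Finset

/-- The set of partitions of `n` into distinct parts, encoded as finsets of
positive integers summing to `n`. -/
def Dpart (n : ℕ) : Finset (Finset ℕ) :=
  (Finset.Icc 1 n).powerset.filter (fun S => S.sum id = n)

/-- The minimal odd excludant: the least odd positive integer not occurring as a part. -/
noncomputable def pmoex (S : Finset ℕ) : ℕ := sInf {m : ℕ | Odd m ∧ m ∉ S}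

/-- The sum of minimal odd excludants over all distinct-parts partitions of `n`. -/
noncomputable def sigmadmoex (n : ℕ) : ℕ := ∑ S ∈ Dpart n, pmoex S

/-- `(−q;q)_∞ = Π_{k ≥ 1} (1 + q^k)` as a formal power series over `ℚ`. -/
noncomputable def prodDistinct : PowerSeries ℚ :=
  PowerSeries.mk fun n =>
    coeff n (∏ k ∈ Finset.range (n + 1), (1 + (X : PowerSeries ℚ) ^ (k + 1)))

/-- `Σ_{n ≥ 1} q^{n²} / (−q;q²)_n` as a formal power series over `ℚ`
(the term of index `n` has order `n² ≥ n`). -/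
noncomputable def sigmaStarSum : PowerSeries ℚ :=
  PowerSeries.mk fun N =>
    coeff N (∑ n ∈ Finset.Icc 1 (N + 1),
      (X : PowerSeries ℚ) ^ (n ^ 2) *
        (∏ k ∈ Finset.range n, (1 + (X : PowerSeries ℚ) ^ (2 * k + 1)))⁻¹)

/- ### Auxiliary lemmas -/

lemma coeff_one_add_X_pow_mul (a j : ℕ) (P : PowerSeries ℚ) :
    coeff j ((1 + X ^ a) * P) = coeff j P + if a ≤ j then coeff (j - a) P else 0 := by
  rw [add_mul, one_mul, map_add, mul_comm ((X: PowerSeries ℚ) ^ a) P, coeff_mul_X_pow']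

/-- counting lemma -/
lemma coeff_prodX (s : Finset ℕ) (j : ℕ) :
    coeff j (∏ m ∈ s, (1 + (X : PowerSeries ℚ) ^ m)) =
      ((s.powerset.filter (fun T => T.sum id = j)).card : ℚ) := by
  induction s using Finset.induction generalizing j with
  | empty =>
    simp only [Finset.prod_empty, powerset_empty, filter_singleton, sum_empty, id,
      coeff_one]
    by_cases h : j = 0 <;> simp [h, eq_comm]
  | @insert a s ha ih =>
    rw [Finset.prod_insert ha, coeff_one_add_X_pow_mul, ih, ih]
    have hsplit : (insert a s).powerset.filter (fun T => T.sum id = j)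
        = (s.powerset.filter (fun T => T.sum id = j)) ∪
          ((s.powerset.filter (fun T => T.sum id + a = j)).image (insert a)) := by
      ext T
      simp only [mem_filter, mem_powerset, mem_union, mem_image]
      constructor
      · rintro ⟨hT, hsum⟩
        by_cases haT : a ∈ T
        · right
          refine ⟨T.erase a, ⟨fun x hx => ?_, ?_⟩, insert_erase haT⟩
          · rcases mem_insert.1 (hT (mem_of_mem_erase hx)) with h | h
            · exact absurd h (ne_of_mem_erase hx)
            · exact h
          · rw [← hsum, ← Finset.sum_erase_add T id haT]; rfl
        · left
          refine ⟨fun x hx => ?_, hsum⟩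
          rcases mem_insert.1 (hT hx) with h | h
          · exact absurd (h ▸ hx) haT
          · exact h
      · rintro (⟨hT, hsum⟩ | ⟨U, ⟨hU, hsum⟩, rfl⟩)
        · exact ⟨fun x hx => mem_insert_of_mem (hT hx), hsum⟩
        · have haU : a ∉ U := fun h => ha (hU h)
          refine ⟨insert_subset_insert a hU, ?_⟩
          rw [Finset.sum_insert haU]
          simpa [add_comm] using hsum
    rw [hsplit, card_union_of_disjoint, Nat.cast_add]
    · congr 1
      split_ifs with hle
      · rw [Finset.card_image_of_injOn]
        · have : (s.powerset.filter (fun T => T.sum id = j - a))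
              = s.powerset.filter (fun T => T.sum id + a = j) :=
            Finset.filter_congr (fun T _ => by omega)
          rw [this]
        · intro U hU V hV hUV
          have haU : a ∉ U := fun h => ha (mem_powerset.1 (mem_filter.1 hU).1 h)
          have haV : a ∉ V := fun h => ha (mem_powerset.1 (mem_filter.1 hV).1 h)
          rw [← Finset.erase_insert haU, ← Finset.erase_insert haV, hUV]
      · symm
        rw [Nat.cast_eq_zero, Finset.card_eq_zero, Finset.image_eq_empty,
          Finset.filter_eq_empty_iff]
        intro T hT
        omega
    · rw [Finset.disjoint_left]
      rintro T hT hT2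
      obtain ⟨U, hU, rfl⟩ := mem_image.1 hT2
      exact ha (mem_powerset.1 (mem_filter.1 hT).1 (mem_insert_self a U))

lemma mem_le_sum {T : Finset ℕ} {x j : ℕ} (hx : x ∈ T) (h : T.sum id = j) : x ≤ j := by
  calc x = id x := rfl
  _ ≤ T.sum id := Finset.single_le_sum (fun i _ => Nat.zero_le (id i)) hx
  _ = j := h

lemma filter_powerset_Icc (j a b : ℕ) (hj : j ≤ a) (hab : a ≤ b) :
    (Finset.Icc 1 a).powerset.filter (fun T => T.sum id = j)
      = (Finset.Icc 1 b).powerset.filter (fun T => T.sum id = j) := by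
  ext T
  simp only [mem_filter, mem_powerset]
  constructor
  · rintro ⟨hT, h⟩
    exact ⟨hT.trans (Finset.Icc_subset_Icc_right hab), h⟩
  · rintro ⟨hT, h⟩
    refine ⟨fun x hx => ?_, h⟩
    have := hT hx
    simp only [Finset.mem_Icc] at this ⊢
    exact ⟨this.1, (mem_le_sum hx h).trans hj⟩

lemma Icc_eq_image (M : ℕ) : Finset.Icc 1 (M+1) = (Finset.range (M+1)).image (· + 1) := by
  ext x
  simp only [Finset.mem_Icc, Finset.mem_image, Finset.mem_range]
  constructor
  · rintro ⟨h1, h2⟩; exact ⟨x - 1, by omega, by omega⟩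
  · rintro ⟨y, hy, rfl⟩; omega

lemma coeff_prodDistinct (N j : ℕ) (hj : j ≤ N) :
    coeff j prodDistinct
      = coeff j (∏ m ∈ Finset.Icc 1 (N+1), (1 + (X : PowerSeries ℚ) ^ m)) := by
  rw [prodDistinct, coeff_mk]
  have h1 : ∏ k ∈ Finset.range (j + 1), (1 + (X : PowerSeries ℚ) ^ (k + 1))
      = ∏ m ∈ Finset.Icc 1 (j+1), (1 + (X : PowerSeries ℚ) ^ m) := by
    rw [Icc_eq_image, Finset.prod_image (fun a _ b _ h => by omega)]
  rw [h1, coeff_prodX, coeff_prodX, filter_powerset_Icc j (j+1) (N+1) (by omega) (by omega)]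

lemma coeff_mul_congr (f g g' : PowerSeries ℚ) (N : ℕ)
    (h : ∀ j ≤ N, coeff j g = coeff j g') :
    coeff N (f * g) = coeff N (f * g') := by
  rw [coeff_mul, coeff_mul]
  refine Finset.sum_congr rfl fun p hp => ?_
  rw [h p.2 (by have := Finset.HasAntidiagonal.mem_antidiagonal.1 hp; omega)]

lemma sum_odds (n : ℕ) : ∑ j ∈ Finset.range n, (2*j+1) = n^2 := by
  induction n with
  | zero => simp
  | succ n ih => rw [Finset.sum_range_succ, ih]; ring

lemma coeff_X_pow_mul'' (m j : ℕ) (g : PowerSeries ℚ) (h : j < m) :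
    coeff j ((X : PowerSeries ℚ)^m * g) = 0 := by
  rw [PowerSeries.coeff_X_pow_mul', if_neg (by omega)]

def odds (n : ℕ) : Finset ℕ := (Finset.range n).image (fun j => 2*j+1)

lemma mem_odds {n x : ℕ} : x ∈ odds n ↔ ∃ j < n, 2*j+1 = x := by
  simp [odds]

lemma pmoex_eq (N : ℕ) (π : Finset ℕ) (hπ : π ∈ Dpart N) :
    pmoex π = 1 + 2 * ((Finset.Icc 1 (N+1)).filter (fun n => odds n ⊆ π)).card := by
  obtain ⟨hsub, hsum⟩ : π ⊆ Finset.Icc 1 N ∧ π.sum id = N := by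
    simpa [Dpart, Finset.mem_filter, Finset.mem_powerset] using hπ
  have hmem : (2*N+1) ∈ {m : ℕ | Odd m ∧ m ∉ π} := by
    refine ⟨⟨N, by ring⟩, fun h => ?_⟩
    have := hsub h
    simp only [Finset.mem_Icc] at this
    omega
  have hne : {m : ℕ | Odd m ∧ m ∉ π}.Nonempty := ⟨_, hmem⟩
  obtain ⟨hodd, hnotin⟩ : Odd (pmoex π) ∧ pmoex π ∉ π := Nat.sInf_mem hne
  obtain ⟨ν, hν⟩ := hodd
  have hle : pmoex π ≤ 2*N+1 := Nat.sInf_le hmem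
  have hmin : ∀ k, Odd k → k < pmoex π → k ∈ π := by
    intro k hk hklt
    by_contra hkn
    have : pmoex π ≤ k := Nat.sInf_le (show k ∈ {m : ℕ | Odd m ∧ m ∉ π} from ⟨hk, hkn⟩)
    omega
  have hiff : ∀ n : ℕ, odds n ⊆ π ↔ n ≤ ν := by
    intro n
    constructor
    · intro h
      by_contra hn
      have : pmoex π ∈ odds n := mem_odds.2 ⟨ν, by omega, by omega⟩
      exact hnotin (h this)
    · intro hn x hx
      obtain ⟨j, hj, rfl⟩ := mem_odds.1 hx
      exact hmin _ ⟨j, by ring⟩ (by omega)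
  have hfilter : (Finset.Icc 1 (N+1)).filter (fun n => odds n ⊆ π) = Finset.Icc 1 ν := by
    ext n
    simp only [Finset.mem_filter, Finset.mem_Icc, hiff]
    omega
  rw [hfilter, Nat.card_Icc]
  omega

lemma sum_odds' (n : ℕ) : (odds n).sum id = n^2 := by
  rw [odds, Finset.sum_image (fun a _ b _ h => by omega)]
  simpa using sum_odds n

lemma odds_subset {n N : ℕ} (hnN : n^2 ≤ N) : odds n ⊆ Finset.Icc 1 (N+1) := by
  intro x hx
  obtain ⟨j, hj, rfl⟩ := mem_odds.1 hx
  have e : (j+1)^2 = j*j + 2*j + 1 := by ring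
  have le2 : (j+1)^2 ≤ n^2 := Nat.pow_le_pow_left (by omega) 2
  simp only [Finset.mem_Icc]; omega

lemma bij_count (N n : ℕ) (hnN : n^2 ≤ N) :
    ((Dpart N).filter (fun π => odds n ⊆ π)).card
      = (((Finset.Icc 1 (N+1)) \ odds n).powerset.filter
          (fun T => T.sum id = N - n^2)).card := by
  set M := n ^ 2 with hM
  have hodds_sub : odds n ⊆ Finset.Icc 1 (N+1) := odds_subset hnN
  apply Finset.card_bij (fun π _ => π \ odds n)
  · intro π hπ
    simp only [Finset.mem_filter, Dpart, Finset.mem_powerset] at hπ ⊢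
    obtain ⟨⟨hsub, hsum⟩, hodds⟩ := hπ
    constructor
    · intro x hx
      simp only [Finset.mem_sdiff] at hx ⊢
      exact ⟨(Finset.Icc_subset_Icc_right (by omega)) (hsub hx.1), hx.2⟩
    · have h3 : (π \ odds n).sum id + M = N := by
        rw [hM, ← sum_odds' n, ← hsum]
        exact Finset.sum_sdiff hodds
      omega
  · intro π1 h1 π2 h2 heq
    simp only [Finset.mem_filter] at h1 h2
    have e1 : π1 \ odds n ∪ odds n = π1 := Finset.sdiff_union_of_subset h1.2
    have e2 : π2 \ odds n ∪ odds n = π2 := Finset.sdiff_union_of_subset h2.2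
    rw [← e1, ← e2, heq]
  · intro T hT
    simp only [Finset.mem_filter, Finset.mem_powerset] at hT
    obtain ⟨hTsub, hTsum⟩ := hT
    have hdisj : Disjoint T (odds n) := by
      rw [Finset.disjoint_left]
      intro x hx hxo
      exact ((Finset.mem_sdiff.1 (hTsub hx)).2) hxo
    refine ⟨T ∪ odds n, ?_, ?_⟩
    · simp only [Finset.mem_filter, Dpart, Finset.mem_powerset]
      have hsum2 : (T ∪ odds n).sum id = N := by
        have : (T ∪ odds n).sum id = T.sum id + (odds n).sum id :=
          Finset.sum_union hdisj
        rw [this, hTsum, sum_odds', ← hM]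
        omega
      refine ⟨⟨?_, hsum2⟩, Finset.subset_union_right⟩
      intro x hx
      have hx1 : 1 ≤ x ∧ x ≤ N + 1 := by
        rcases Finset.mem_union.1 hx with h | h
        · have := Finset.mem_sdiff.1 (hTsub h)
          simpa using Finset.mem_Icc.1 this.1
        · simpa using Finset.mem_Icc.1 (hodds_sub h)
      have hxle : x ≤ N := by
        calc x = id x := rfl
        _ ≤ (T ∪ odds n).sum id :=
          Finset.single_le_sum (fun i _ => Nat.zero_le (id i)) hx
        _ = N := hsum2
      simp only [Finset.mem_Icc]
      exact ⟨hx1.1, hxle⟩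
    · exact Finset.union_sdiff_cancel_right hdisj

/-- the per-term identity -/
lemma term_eq (N n : ℕ) :
    coeff N (prodDistinct * ((X : PowerSeries ℚ) ^ (n ^ 2) *
        (∏ k ∈ Finset.range n, (1 + (X : PowerSeries ℚ) ^ (2 * k + 1)))⁻¹))
      = (((Dpart N).filter (fun π => odds n ⊆ π)).card : ℚ) := by
  set O : PowerSeries ℚ := ∏ k ∈ Finset.range n, (1 + (X : PowerSeries ℚ) ^ (2 * k + 1))
    with hO
  by_cases hnN : n ^ 2 ≤ N
  · -- main case
    have hodds_sub : odds n ⊆ Finset.Icc 1 (N+1) := odds_subset hnN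
    set R : PowerSeries ℚ := ∏ m ∈ (Finset.Icc 1 (N+1)) \ odds n,
      (1 + (X : PowerSeries ℚ) ^ m) with hR
    set P : PowerSeries ℚ := ∏ m ∈ Finset.Icc 1 (N+1), (1 + (X : PowerSeries ℚ) ^ m)
      with hP
    have hOodds : O = ∏ m ∈ odds n, (1 + (X : PowerSeries ℚ) ^ m) := by
      rw [hO, odds, Finset.prod_image (fun a _ b _ h => by omega)]
    have hPO : P = O * R := by
      rw [hP, ← Finset.prod_sdiff hodds_sub, hOodds, hR, mul_comm]
    have hconst : constantCoeff O ≠ 0 := by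
      rw [hO, map_prod]
      have : ∀ k ∈ Finset.range n, constantCoeff (1 + (X: PowerSeries ℚ) ^ (2*k+1)) = 1 := by
        intro k _
        rw [map_add, map_one, map_pow, constantCoeff_X, zero_pow (by omega), add_zero]
      rw [Finset.prod_congr rfl this]
      simp
    have hcancel : O * O⁻¹ = 1 := PowerSeries.mul_inv_cancel O hconst
    have step1 : coeff N (prodDistinct * ((X : PowerSeries ℚ) ^ (n ^ 2) * O⁻¹))
        = coeff N (P * ((X : PowerSeries ℚ) ^ (n ^ 2) * O⁻¹)) := by
      rw [mul_comm prodDistinct, mul_comm P]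
      exact coeff_mul_congr _ _ _ N (fun j hj => coeff_prodDistinct N j hj)
    have step2 : P * ((X : PowerSeries ℚ) ^ (n ^ 2) * O⁻¹)
        = (X : PowerSeries ℚ) ^ (n ^ 2) * R := by
      rw [hPO]
      have : O * R * ((X : PowerSeries ℚ) ^ (n ^ 2) * O⁻¹)
          = (X : PowerSeries ℚ) ^ (n ^ 2) * R * (O * O⁻¹) := by ring
      rw [this, hcancel, mul_one]
    rw [step1, step2, PowerSeries.coeff_X_pow_mul' , if_pos hnN, hR, coeff_prodX,
      bij_count N n hnN]
  · -- vanishing case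
    have e1 : prodDistinct * ((X : PowerSeries ℚ) ^ (n ^ 2) * O⁻¹)
        = (X : PowerSeries ℚ) ^ (n ^ 2) * (prodDistinct * O⁻¹) := by ring
    rw [e1, coeff_X_pow_mul'' _ _ _ (by omega)]
    symm
    rw [Nat.cast_eq_zero, Finset.card_eq_zero, Finset.filter_eq_empty_iff]
    intro π hπ
    intro hodds
    obtain ⟨hsub, hsum⟩ : π ⊆ Finset.Icc 1 N ∧ π.sum id = N := by
      simpa [Dpart, Finset.mem_filter, Finset.mem_powerset] using hπ
    have h1 : (odds n).sum id ≤ π.sum id :=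
      Finset.sum_le_sum_of_subset hodds
    rw [sum_odds', hsum] at h1
    omega

lemma sigmadmoex_eq (N : ℕ) :
    sigmadmoex N = (Dpart N).card
      + 2 * ∑ n ∈ Finset.Icc 1 (N+1), ((Dpart N).filter (fun π => odds n ⊆ π)).card := by
  rw [sigmadmoex]
  rw [Finset.sum_congr rfl (fun π hπ => pmoex_eq N π hπ)]
  rw [Finset.sum_add_distrib, Finset.sum_const, smul_eq_mul, mul_one, ← Finset.mul_sum]
  congr 1
  congr 1
  have : ∀ π ∈ Dpart N, ((Finset.Icc 1 (N+1)).filter (fun n => odds n ⊆ π)).card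
      = ∑ n ∈ Finset.Icc 1 (N+1), if odds n ⊆ π then 1 else 0 := by
    intro π _
    rw [Finset.card_filter]
  rw [Finset.sum_congr rfl this, Finset.sum_comm]
  refine Finset.sum_congr rfl fun n _ => ?_
  rw [Finset.card_filter]

/-- `Σ_{n≥0} σ_d moex(n) q^n = (−q;q)_∞ · (1 + 2 Σ_{n≥1} q^{n²}/(−q;q²)_n)`. -/
theorem stmt_10 :
    (PowerSeries.mk fun n => (sigmadmoex n : ℚ)) =
      prodDistinct * (1 + 2 * sigmaStarSum) := by
  ext N
  rw [coeff_mk]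
  -- expand RHS
  have hexp : prodDistinct * (1 + 2 * sigmaStarSum)
      = prodDistinct + (prodDistinct * sigmaStarSum + prodDistinct * sigmaStarSum) := by
    ring
  rw [hexp, map_add, map_add]
  -- the product-sum coefficient
  have hG : coeff N (prodDistinct * sigmaStarSum)
      = ∑ n ∈ Finset.Icc 1 (N+1),
          coeff N (prodDistinct * ((X : PowerSeries ℚ) ^ (n ^ 2) *
            (∏ k ∈ Finset.range n, (1 + (X : PowerSeries ℚ) ^ (2 * k + 1)))⁻¹)) := by
    have hcongr : ∀ j ≤ N, coeff j sigmaStarSum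
        = coeff j (∑ n ∈ Finset.Icc 1 (N + 1),
            (X : PowerSeries ℚ) ^ (n ^ 2) *
              (∏ k ∈ Finset.range n, (1 + (X : PowerSeries ℚ) ^ (2 * k + 1)))⁻¹) := by
      intro j hj
      rw [sigmaStarSum, coeff_mk, map_sum, map_sum]
      apply Finset.sum_subset
      · exact Finset.Icc_subset_Icc_right (by omega)
      · intro n hn hn'
        simp only [Finset.mem_Icc] at hn hn'
        have hnj : j < n ^ 2 := by
          have h1 : n ≤ n ^ 2 := Nat.le_self_pow (by omega) n
          omega
        exact coeff_X_pow_mul'' _ _ _ hnj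
    rw [coeff_mul_congr _ _ _ N hcongr, Finset.mul_sum, map_sum]
  rw [hG]
  have hterm : ∀ n ∈ Finset.Icc 1 (N+1),
      coeff N (prodDistinct * ((X : PowerSeries ℚ) ^ (n ^ 2) *
        (∏ k ∈ Finset.range n, (1 + (X : PowerSeries ℚ) ^ (2 * k + 1)))⁻¹))
      = (((Dpart N).filter (fun π => odds n ⊆ π)).card : ℚ) :=
    fun n _ => term_eq N n
  rw [Finset.sum_congr rfl hterm]
  -- LHS combinatorics
  have hD : coeff N prodDistinct = ((Dpart N).card : ℚ) := by
    rw [coeff_prodDistinct N N le_rfl, coeff_prodX,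
      ← filter_powerset_Icc N N (N+1) le_rfl (by omega)]
    rfl
  rw [hD, sigmadmoex_eq N]
  push_cast
  ring
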